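/- (Semantic soundness of the QFUA Relax rule) If ⊨F [P] C [Q] holds and fv(F) ∩ mod(C) = ∅ (the free variables of the resource function F are not modified by C), then ⊨F [P + F] C [Q + F] holds, where (P + F)(σ) = P(σ) + F(σ). -/

import Mathlib

/-! Basic language: variables, states, semantic expressions, resource values. -/

abbrev Var := String
abbrev State := Var → ℤ
abbrev AExp := State → ℤ
abbrev BExp := State → Bool

/-- Resource values: ℤ ∪ {−∞, +∞}. -/
abbrev RVal := WithTop (WithBot ℤ)
/-- Resource functions. -/
abbrev RF := State → RVal

/-- Embedding of an integer into `RVal`. -/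
def iv (n : ℤ) : RVal := ((n : WithBot ℤ) : RVal)

/-- State update. -/
def upd (σ : State) (x : Var) (v : ℤ) : State := fun y => if y = x then v else σ y

/-- Commands of the IMP-like language. -/
inductive Cmd where
  | skip
  | assign (x : Var) (e : AExp)
  | assume' (b : BExp)
  | tick (e : AExp)
  | seq (c₁ c₂ : Cmd)
  | choice (c₁ c₂ : Cmd)
  | star (c : Cmd)
  | local' (x : Var) (c : Cmd)

/-- Resource-aware big-step semantics: `BigStep C σ p l τ q` is C, σ, p ⇓_l τ, q. -/
inductive BigStep : Cmd → State → ℤ → ℤ → State → ℤ → Prop where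
  | skip {σ p} : BigStep .skip σ p p σ p
  | assign {x e σ p} : BigStep (.assign x e) σ p p (upd σ x (e σ)) p
  | assume' {b : BExp} {σ p} : b σ = true → BigStep (.assume' b) σ p p σ p
  | tick {e σ p} : BigStep (.tick e) σ p (min p (p - e σ)) σ (p - e σ)
  | seq {c₁ c₂ σ p l₁ ρ r l₂ τ q} : BigStep c₁ σ p l₁ ρ r → BigStep c₂ ρ r l₂ τ q →
      BigStep (.seq c₁ c₂) σ p (min l₁ l₂) τ q
  | choiceL {c₁ c₂ σ p l τ q} : BigStep c₁ σ p l τ q → BigStep (.choice c₁ c₂) σ p l τ q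
  | choiceR {c₁ c₂ σ p l τ q} : BigStep c₂ σ p l τ q → BigStep (.choice c₁ c₂) σ p l τ q
  | starZero {c σ p} : BigStep (.star c) σ p p σ p
  | starStep {c σ p l τ q} : BigStep (.seq c (.star c)) σ p l τ q → BigStep (.star c) σ p l τ q
  | local' {x c σ p l τ q} (v : ℤ) : BigStep c σ p l τ q →
      BigStep (.local' x c) (upd σ x v) p l (upd τ x v) q

/-- C, σ, p ⇓ τ, q. -/
def BigStepP (c : Cmd) (σ : State) (p : ℤ) (τ : State) (q : ℤ) : Prop :=
  ∃ l, BigStep c σ p l τ q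

/-- C, σ, p ⇓≤0 τ, q. -/
def BigStepL (c : Cmd) (σ : State) (p : ℤ) (τ : State) (q : ℤ) : Prop :=
  ∃ l ≤ 0, BigStep c σ p l τ q

/-- `Indep f S`: the state function `f` does not depend on the variables in `S`
(i.e. fv(f) ∩ S = ∅). -/
def Indep {α : Type _} (f : State → α) (S : Set Var) : Prop :=
  ∀ σ σ' : State, (∀ y ∉ S, σ y = σ' y) → f σ = f σ'

/-- `Fresh y f`: the variable `y` is not free in the state function `f`. -/
def Fresh {α : Type _} (y : Var) (f : State → α) : Prop :=
  ∀ σ v, f (upd σ y v) = f σ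

/-- The set of variables possibly modified by a command. -/
def modVars : Cmd → Set Var
  | .skip => ∅
  | .assign x _ => {x}
  | .assume' _ => ∅
  | .tick _ => ∅
  | .seq c₁ c₂ => modVars c₁ ∪ modVars c₂
  | .choice c₁ c₂ => modVars c₁ ∪ modVars c₂
  | .star c => modVars c
  | .local' x c => modVars c \ {x}

/-- Substitution e[y/x] on semantic expressions. -/
def esubst {α : Type _} (e : State → α) (x y : Var) : State → α :=
  fun σ => e (upd σ x (σ y))

/-- `y` is not free in the command `C`. -/
def freshC (y : Var) : Cmd → Prop
  | .skip => True
  | .assign z e => y ≠ z ∧ Fresh y e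
  | .assume' b => Fresh y b
  | .tick e => Fresh y e
  | .seq c₁ c₂ => freshC y c₁ ∧ freshC y c₂
  | .choice c₁ c₂ => freshC y c₁ ∧ freshC y c₂
  | .star c => freshC y c
  | .local' z c => y = z ∨ freshC y c

/-- Substitution C[y/x]: rename every free occurrence of `x` in `C` to `y`. -/
def csubst : Cmd → Var → Var → Cmd
  | .skip, _, _ => .skip
  | .assign z e, x, y => .assign (if z = x then y else z) (esubst e x y)
  | .assume' b, x, y => .assume' (esubst b x y)
  | .tick e, x, y => .tick (esubst e x y)
  | .seq c₁ c₂, x, y => .seq (csubst c₁ x y) (csubst c₂ x y)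
  | .choice c₁ c₂, x, y => .choice (csubst c₁ x y) (csubst c₂ x y)
  | .star c, x, y => .star (csubst c x y)
  | .local' z c, x, y => if z = x then .local' z c else .local' z (csubst c x y)

/-- Bounded iteration: C⁰ = skip, C^(n+1) = C; Cⁿ. -/
def iter (c : Cmd) : ℕ → Cmd
  | 0 => .skip
  | n + 1 => .seq c (iter c n)

/-- Pointwise order on resource functions. -/
def rle (P Q : RF) : Prop := ∀ σ, P σ ≤ Q σ

/-- [B]: +∞ if B holds, −∞ otherwise. -/
def bnd (b : BExp) : RF := fun σ => if b σ then ⊤ else ⊥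

/-- `P` is finitely supported: it depends on only finitely many variables. -/
def FinSupp (P : RF) : Prop := ∃ S : Finset Var, Indep P ((↑S : Set Var)ᶜ)

/-- Semantic equivalence of commands. -/
def CEquiv (c c' : Cmd) : Prop := ∀ σ p l τ q, BigStep c σ p l τ q ↔ BigStep c' σ p l τ q

/-- QFUA validity ⊨F [P] C [Q]. -/
def FValid (P : RF) (c : Cmd) (Q : RF) : Prop :=
  ∀ τ (q : ℤ), Q τ ≤ iv q → ∃ σ, ∃ p : ℤ, P σ ≤ iv p ∧ BigStepP c σ p τ q

/-- QBUA validity ⊨B [P] C [Q]. -/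
def BValid (P : RF) (c : Cmd) (Q : RF) : Prop :=
  ∀ σ (p : ℤ), iv p ≤ P σ → ∃ τ, ∃ q : ℤ, iv q ≤ Q τ ∧ BigStepP c σ p τ q

/-- QBUA◇ validity ⊨B◇ [P] C [Q]. -/
def DValid (P : RF) (c : Cmd) (Q : RF) : Prop :=
  ∀ σ (p : ℤ), iv p ≤ P σ → ∃ τ, ∃ q : ℤ, iv q ≤ Q τ ∧ BigStepL c σ p τ q


lemma bigStep_shift {c σ p l τ q} (h : BigStep c σ p l τ q) (k : ℤ) :
    BigStep c σ (p + k) (l + k) τ (q + k) := by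
  induction h with
  | skip => exact .skip
  | assign => exact .assign
  | assume' hb => exact .assume' hb
  | @tick e σ p =>
    have h := @BigStep.tick e σ (p + k)
    have h1 : min (p + k) (p + k - e σ) = min p (p - e σ) + k := by omega
    have h2 : p + k - e σ = p - e σ + k := by omega
    rw [h1, h2] at h; exact h
  | seq _ _ ih1 ih2 =>
    have h3 : ∀ a b : ℤ, min a b + k = min (a + k) (b + k) := by omega
    rw [h3]; exact .seq ih1 ih2
  | choiceL _ ih => exact .choiceL ih
  | choiceR _ ih => exact .choiceR ih
  | starZero => exact .starZero
  | starStep _ ih => exact .starStep ih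
  | local' v _ ih => exact .local' v ih

lemma bigStep_mod {c σ p l τ q} (h : BigStep c σ p l τ q) :
    ∀ y ∉ modVars c, σ y = τ y := by
  induction h with
  | skip => intro y _; rfl
  | @assign x e σ p =>
    intro y hy
    simp [modVars] at hy
    simp [upd, hy]
  | assume' _ => intro y _; rfl
  | tick => intro y _; rfl
  | seq _ _ ih1 ih2 =>
    intro y hy
    simp [modVars] at hy
    rw [ih1 y hy.1, ih2 y hy.2]
  | choiceL _ ih => intro y hy; simp [modVars] at hy; exact ih y hy.1
  | choiceR _ ih => intro y hy; simp [modVars] at hy; exact ih y hy.2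
  | starZero => intro y _; rfl
  | starStep _ ih => intro y hy; exact ih y (by simpa [modVars] using hy)
  | @local' x c σ p l τ q v _ ih =>
    intro y hy
    simp [modVars] at hy
    by_cases hx : y = x
    · simp [upd, hx]
    · simp [upd, hx]; exact ih y (fun hm => hx (hy hm))

lemma rval_cases (a : RVal) : a = ⊤ ∨ ∃ b : WithBot ℤ, a = (b : RVal) := by
  induction a using WithTop.recTopCoe with
  | top => exact Or.inl rfl
  | coe b => exact Or.inr ⟨b, rfl⟩

lemma wbot_cases (b : WithBot ℤ) : b = ⊥ ∨ ∃ n : ℤ, b = (n : WithBot ℤ) := by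
  induction b using WithBot.recBotCoe with
  | bot => exact Or.inl rfl
  | coe n => exact Or.inr ⟨n, rfl⟩

lemma wb_sub {b : WithBot ℤ} {m q : ℤ} (h : b + (m : WithBot ℤ) ≤ (q : WithBot ℤ)) :
    b ≤ ((q - m : ℤ) : WithBot ℤ) := by
  induction b using WithBot.recBotCoe with
  | bot => exact bot_le
  | coe n =>
    rw [← WithBot.coe_add, WithBot.coe_le_coe] at h
    exact WithBot.coe_le_coe.mpr (by omega)

theorem fvalid_relax (P Q F : RF) (C : Cmd)
    (h : FValid P C Q) (hF : Indep F (modVars C)) :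
    FValid (fun σ => P σ + F σ) C (fun σ => Q σ + F σ) := by
  intro τ q hq
  simp only at hq
  rcases rval_cases (F τ) with hFτ | ⟨fb, hFτ⟩
  · rw [hFτ, WithTop.add_top] at hq; simp [iv] at hq
  rcases rval_cases (Q τ) with hQτ | ⟨qb, hQτ⟩
  · rw [hQτ, WithTop.top_add] at hq; simp [iv] at hq
  rw [hQτ, hFτ, ← WithTop.coe_add, iv, WithTop.coe_le_coe] at hq
  rcases wbot_cases fb with hfb | ⟨m, hfb⟩
  · -- F τ = ⊥
    subst hfb
    obtain ⟨q', hq'⟩ : ∃ q' : ℤ, Q τ ≤ iv q' := by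
      rcases wbot_cases qb with hqb | ⟨n, hqb⟩
      · exact ⟨0, by rw [hQτ, hqb, iv]; exact WithTop.coe_le_coe.mpr bot_le⟩
      · exact ⟨n, le_of_eq (by rw [hQτ, hqb, iv])⟩
    obtain ⟨σ, p, hp, l, hbs⟩ := h τ q' hq'
    have hFσ : F σ = F τ := hF σ τ (bigStep_mod hbs)
    refine ⟨σ, p + (q - q'), ?_, l + (q - q'), ?_⟩
    · show P σ + F σ ≤ iv (p + (q - q'))
      rw [hFσ, hFτ]
      rcases rval_cases (P σ) with hPσ | ⟨pb, hPσ⟩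
      · rw [hPσ] at hp; simp [iv] at hp
      · rw [hPσ, ← WithTop.coe_add, WithBot.add_bot, iv]
        exact WithTop.coe_le_coe.mpr bot_le
    · have := bigStep_shift hbs (q - q')
      rwa [show q' + (q - q') = q by ring] at this
  · -- F τ = m
    subst hfb
    have hqb : Q τ ≤ iv (q - m) := by
      rw [hQτ, iv, WithTop.coe_le_coe]; exact wb_sub hq
    obtain ⟨σ, p, hp, l, hbs⟩ := h τ (q - m) hqb
    have hFσ : F σ = F τ := hF σ τ (bigStep_mod hbs)
    refine ⟨σ, p + m, ?_, l + m, ?_⟩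
    · show P σ + F σ ≤ iv (p + m)
      rw [hFσ, hFτ]
      rcases rval_cases (P σ) with hPσ | ⟨pb, hPσ⟩
      · rw [hPσ] at hp; simp [iv] at hp
      · rw [hPσ] at hp ⊢
        rw [iv] at hp ⊢
        rw [WithTop.coe_le_coe] at hp
        rw [← WithTop.coe_add, WithTop.coe_le_coe]
        calc pb + (m : WithBot ℤ) ≤ (p : WithBot ℤ) + m := add_le_add_left hp _
          _ = ((p + m : ℤ) : WithBot ℤ) := by push_cast; ring
    · have := bigStep_shift hbs m
      rwa [show q - m + m = q by ring] at this
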